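/- Let a ≥ 0, let f : [0,∞) → ℝ be bounded and continuous, let 0 < τ ≤ 1 and x ∈ [0,∞), and suppose the Lipschitz-type maximal function ω̃_τ(f,x) = sup_{t∈[0,∞), t≠x} |f(t) − f(x)|/|t−x|^τ is finite. Then for all n ∈ ℕ, |K_n^a(f;x) − f(x)| ≤ ω̃_τ(f,x)·(u_{n,2}^a(x))^{τ/2}, where u_{n,2}^a(x) = K_n^a((t−x)²;x). -/

import Mathlib

open MeasureTheory Filter

noncomputable section

/-- Rising factorial `(n)_i = n(n+1)⋯(n+i-1)`, with `(n)_0 = 1`. -/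
def risingFac (n : ℕ) : ℕ → ℝ
  | 0 => 1
  | i + 1 => risingFac n i * ((n : ℝ) + i)

/-- `P_k(n,a) = Σ_{i=0}^{k} C(k,i) (n)_i a^(k-i)`. -/
def Pba (k n : ℕ) (a : ℝ) : ℝ :=
  ∑ i ∈ Finset.range (k + 1), (k.choose i : ℝ) * risingFac n i * a ^ (k - i)

/-- Generalized Baskakov basis function `W_{n,k}^a(x)`. -/
def Wgb (a : ℝ) (n k : ℕ) (x : ℝ) : ℝ :=
  Real.exp (-(a * x) / (1 + x)) * (Pba k n a / (Nat.factorial k : ℝ)) * x ^ k /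
    (1 + x) ^ (n + k)

/-- Generalized Baskakov–Kantorovich operator `K_n^a(f;x)`. -/
def Kgb (a : ℝ) (n : ℕ) (f : ℝ → ℝ) (x : ℝ) : ℝ :=
  ((n : ℝ) + 1) * ∑' k : ℕ,
    Wgb a n k x * ∫ t in ((k : ℝ) / ((n : ℝ) + 1))..(((k : ℝ) + 1) / ((n : ℝ) + 1)), f t


/-- Lipschitz-type maximal function
`ω̃_τ(f,x) = sup_{t∈[0,∞), t≠x} |f(t) − f(x)|/|t−x|^τ`. -/
def lipMaximal (f : ℝ → ℝ) (τ x : ℝ) : ℝ :=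
  sSup {y | ∃ t : ℝ, 0 ≤ t ∧ t ≠ x ∧ y = |f t - f x| / |t - x| ^ τ}

lemma risingFac_eq (n i : ℕ) : risingFac n i = (n.ascFactorial i : ℝ) := by
  induction i with
  | zero => simp [risingFac, Nat.ascFactorial]
  | succ i ih => rw [risingFac, ih, Nat.ascFactorial_succ]; push_cast; ring

lemma risingFac_nonneg (n i : ℕ) : 0 ≤ risingFac n i := by
  rw [risingFac_eq]; positivity

lemma risingFac_zero' (i : ℕ) : risingFac 0 (i + 1) = 0 := by
  induction i with
  | zero => simp [risingFac]
  | succ i ih => rw [risingFac, ih]; ring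

-- (c+n) c^n ≤ c (c+1)^n for c > 0
lemma aux_pow_ineq (c : ℝ) (hc : 0 < c) (n : ℕ) :
    (c + n) * c ^ n ≤ c * (c + 1) ^ n := by
  have hm2 : (-2:ℝ) ≤ 1 / c := by
    have h0 : (0:ℝ) ≤ 1/c := by positivity
    linarith
  have h := one_add_mul_le_pow hm2 n
  have h2 := mul_le_mul_of_nonneg_left h (by positivity : (0:ℝ) ≤ c ^ n * c)
  have hcne : c ≠ 0 := hc.ne'
  calc (c + n) * c ^ n = c ^ n * c * (1 + n * (1 / c)) := by field_simp
    _ ≤ c ^ n * c * (1 + 1 / c) ^ n := h2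
    _ = c * (c * (1 + 1 / c)) ^ n := by rw [mul_pow]; ring
    _ = c * (c + 1) ^ n := by rw [mul_one_add, mul_one_div, div_self hcne]

lemma risingFac_le (n i : ℕ) : risingFac n i ≤ (i.factorial : ℝ) * ((i : ℝ) + 1) ^ n := by
  induction i with
  | zero => simp [risingFac]
  | succ i ih =>
      have hc : (0:ℝ) < (i : ℝ) + 1 := by positivity
      have key := aux_pow_ineq ((i:ℝ)+1) hc n
      have hni : (0:ℝ) ≤ (n : ℝ) + i := by positivity
      have hps : (0:ℝ) ≤ ((i : ℝ) + 1) ^ n := by positivity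
      have hfa : (0:ℝ) ≤ (i.factorial : ℝ) := by positivity
      have step1 : risingFac n (i+1) ≤ (i.factorial : ℝ) * ((i : ℝ) + 1) ^ n * ((n : ℝ) + i) := by
        show risingFac n i * ((n : ℝ) + i) ≤ _
        exact mul_le_mul_of_nonneg_right ih hni
      have step2 : (i.factorial : ℝ) * ((i : ℝ) + 1) ^ n * ((n : ℝ) + i)
          ≤ (i.factorial : ℝ) * ((((i:ℝ)+1) + (n:ℝ)) * ((i:ℝ)+1) ^ n) := by
        have : ((n : ℝ) + i) ≤ ((i:ℝ)+1) + (n:ℝ) := by linarith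
        nlinarith [mul_le_mul_of_nonneg_left this hps]
      have step3 : (i.factorial : ℝ) * ((((i:ℝ)+1) + (n:ℝ)) * ((i:ℝ)+1) ^ n)
          ≤ (i.factorial : ℝ) * (((i:ℝ)+1) * (((i:ℝ)+1) + 1) ^ n) :=
        mul_le_mul_of_nonneg_left key hfa
      have step4 : (i.factorial : ℝ) * (((i:ℝ)+1) * (((i:ℝ)+1) + 1) ^ n)
          = ((i+1).factorial : ℝ) * (((i+1 : ℕ) : ℝ) + 1) ^ n := by
        rw [Nat.factorial_succ]; push_cast; ring
      linarith

lemma Pba_nonneg (k n : ℕ) (a : ℝ) (ha : 0 ≤ a) : 0 ≤ Pba k n a := by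
  apply Finset.sum_nonneg
  intro i _
  have := risingFac_nonneg n i
  positivity

lemma Pba_zero (n : ℕ) (a : ℝ) : Pba 0 n a = 1 := by
  simp [Pba, risingFac]

lemma Pba_le (k n : ℕ) (a : ℝ) (ha : 0 ≤ a) :
    Pba k n a ≤ (k.factorial : ℝ) * ((k : ℝ) + 1) ^ n * Real.exp a := by
  have step1 : Pba k n a ≤ ∑ i ∈ Finset.range (k + 1),
      (k.factorial : ℝ) * ((k:ℝ)+1) ^ n * (a ^ (k - i) / ((k - i).factorial : ℝ)) := by
    apply Finset.sum_le_sum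
    intro i hi
    rw [Finset.mem_range, Nat.lt_succ_iff] at hi
    have h1 : risingFac n i ≤ (i.factorial : ℝ) * ((i : ℝ) + 1) ^ n := risingFac_le n i
    have hch : (k.choose i : ℝ) * (i.factorial : ℝ) * ((k-i).factorial : ℝ) = (k.factorial : ℝ) := by
      norm_cast
      exact Nat.choose_mul_factorial_mul_factorial hi
    have hik : ((i : ℝ) + 1) ^ n ≤ ((k : ℝ) + 1) ^ n := by
      apply pow_le_pow_left₀ (by positivity)
      have : (i:ℝ) ≤ (k:ℝ) := Nat.cast_le.2 hi
      linarith
    have hc0 : (0:ℝ) ≤ (k.choose i : ℝ) := Nat.cast_nonneg _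
    have ha' : (0:ℝ) ≤ a ^ (k - i) := by positivity
    have h2 : (k.choose i : ℝ) * risingFac n i ≤ (k.choose i : ℝ) * ((i.factorial : ℝ) * ((k : ℝ) + 1) ^ n) := by
      apply mul_le_mul_of_nonneg_left _ hc0
      calc risingFac n i ≤ (i.factorial : ℝ) * ((i : ℝ) + 1) ^ n := h1
        _ ≤ (i.factorial : ℝ) * ((k : ℝ) + 1) ^ n :=
          mul_le_mul_of_nonneg_left hik (by positivity)
    have h3 : (k.choose i : ℝ) * (i.factorial : ℝ) * ((k : ℝ) + 1) ^ n
        = (k.factorial : ℝ) * ((k:ℝ)+1) ^ n / ((k-i).factorial : ℝ) := by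
      rw [eq_div_iff (by positivity : ((k - i).factorial : ℝ) ≠ 0)]
      rw [← hch]; ring
    calc (k.choose i : ℝ) * risingFac n i * a ^ (k - i)
        ≤ (k.choose i : ℝ) * ((i.factorial : ℝ) * ((k : ℝ) + 1) ^ n) * a ^ (k - i) :=
          mul_le_mul_of_nonneg_right h2 ha'
      _ = (k.choose i : ℝ) * (i.factorial : ℝ) * ((k : ℝ) + 1) ^ n * a ^ (k - i) := by ring
      _ = (k.factorial : ℝ) * ((k:ℝ)+1) ^ n * (a ^ (k - i) / ((k - i).factorial : ℝ)) := by
          rw [h3]; ring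
  have step2 : ∑ i ∈ Finset.range (k + 1), (a ^ (k - i) / ((k - i).factorial : ℝ))
      = ∑ j ∈ Finset.range (k + 1), a ^ j / (j.factorial : ℝ) := by
    rw [← Finset.sum_range_reflect (fun j => a ^ j / (j.factorial : ℝ)) (k+1)]
    apply Finset.sum_congr rfl
    intro i hi
    have h : k + 1 - 1 - i = k - i := by omega
    simp only [h]
  have step3 : ∑ j ∈ Finset.range (k + 1), a ^ j / (j.factorial : ℝ) ≤ Real.exp a :=
    Real.sum_le_exp_of_nonneg ha _
  calc Pba k n a ≤ ∑ i ∈ Finset.range (k + 1),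
      (k.factorial : ℝ) * ((k:ℝ)+1) ^ n * (a ^ (k - i) / ((k - i).factorial : ℝ)) := step1
    _ = (k.factorial : ℝ) * ((k:ℝ)+1) ^ n * ∑ i ∈ Finset.range (k + 1), (a ^ (k - i) / ((k - i).factorial : ℝ)) := by
        rw [Finset.mul_sum]
    _ = (k.factorial : ℝ) * ((k:ℝ)+1) ^ n * ∑ j ∈ Finset.range (k + 1), a ^ j / (j.factorial : ℝ) := by
        rw [step2]
    _ ≤ (k.factorial : ℝ) * ((k:ℝ)+1) ^ n * Real.exp a := by
        apply mul_le_mul_of_nonneg_left step3 (by positivity)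


lemma Wgb_nonneg {a x : ℝ} (ha : 0 ≤ a) (hx : 0 ≤ x) (n k : ℕ) : 0 ≤ Wgb a n k x := by
  have h1 := Pba_nonneg k n a ha
  have h2 : (0:ℝ) < 1 + x := by linarith
  unfold Wgb
  positivity

lemma Wgb_zero_pos {a x : ℝ} (hx : 0 ≤ x) (n : ℕ) : 0 < Wgb a n 0 x := by
  unfold Wgb
  rw [Pba_zero]
  have h2 : (0:ℝ) < 1 + x := by linarith
  simp only [Nat.factorial_zero, Nat.cast_one, div_one, pow_zero, Nat.add_zero, mul_one]
  positivity

lemma Wgb_le {a x : ℝ} (ha : 0 ≤ a) (hx : 0 ≤ x) (n k : ℕ) :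
    Wgb a n k x ≤ Real.exp a * (((k:ℝ)+1) ^ n * (x / (1+x)) ^ k) := by
  have h2 : (0:ℝ) < 1 + x := by linarith
  have hexp : Real.exp (-(a * x) / (1 + x)) ≤ 1 := by
    rw [Real.exp_le_one_iff]
    apply div_nonpos_of_nonpos_of_nonneg
    · nlinarith
    · linarith
  have hP : Pba k n a / (k.factorial : ℝ) ≤ ((k:ℝ)+1) ^ n * Real.exp a := by
    rw [div_le_iff₀ (by positivity : (0:ℝ) < (k.factorial : ℝ))]
    calc Pba k n a ≤ (k.factorial : ℝ) * ((k : ℝ) + 1) ^ n * Real.exp a := Pba_le k n a ha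
      _ = ((k:ℝ)+1) ^ n * Real.exp a * (k.factorial : ℝ) := by ring
  have hxk : x ^ k / (1+x) ^ (n+k) ≤ (x / (1+x)) ^ k := by
    rw [div_pow, pow_add]
    apply div_le_div_of_nonneg_left (by positivity) (by positivity)
    calc (1+x) ^ k = 1 * (1+x) ^ k := (one_mul _).symm
      _ ≤ (1+x) ^ n * (1+x) ^ k := by
        apply mul_le_mul_of_nonneg_right _ (by positivity)
        exact one_le_pow₀ (by linarith)
  have hPn : 0 ≤ Pba k n a / (k.factorial : ℝ) := by
    have := Pba_nonneg k n a ha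
    positivity
  calc Wgb a n k x
      = Real.exp (-(a * x) / (1 + x)) * (Pba k n a / (k.factorial : ℝ)) * (x ^ k / (1+x)^(n+k)) := by
        unfold Wgb; ring
    _ ≤ 1 * (((k:ℝ)+1) ^ n * Real.exp a) * (x / (1+x)) ^ k := by
        apply mul_le_mul
        · apply mul_le_mul hexp hP hPn (by norm_num)
        · exact hxk
        · positivity
        · positivity
    _ = Real.exp a * (((k:ℝ)+1) ^ n * (x / (1+x)) ^ k) := by ring

lemma summable_poly_geom {w : ℝ} (hw0 : 0 ≤ w) (hw1 : w < 1) (m : ℕ) :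
    Summable (fun k : ℕ => ((k:ℝ)+1) ^ m * w ^ k) := by
  have hnorm : ‖w‖ < 1 := by rw [Real.norm_eq_abs, abs_of_nonneg hw0]; exact hw1
  have h1 : Summable (fun k : ℕ => (2:ℝ)^m * ((k:ℝ) ^ m * w ^ k)) :=
    (summable_pow_mul_geometric_of_norm_lt_one m hnorm).mul_left _
  have h2 : Summable (fun k : ℕ => (2:ℝ)^m * w ^ k) :=
    (summable_geometric_of_norm_lt_one hnorm).mul_left _
  refine Summable.of_nonneg_of_le (f := fun k : ℕ => (2:ℝ)^m * ((k:ℝ) ^ m * w ^ k) + (2:ℝ)^m * w ^ k)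
    (fun k => by positivity) (fun k => ?_) (h1.add h2)
  have hb : ((k:ℝ)+1) ^ m ≤ (2:ℝ)^m * (k:ℝ)^m + (2:ℝ)^m := by
    rcases Nat.eq_zero_or_pos k with hk | hk
    · subst hk
      simp only [Nat.cast_zero, zero_add, one_pow]
      have h3 : (0:ℝ) ≤ (2:ℝ)^m * (0:ℝ)^m := by positivity
      have h4 : (1:ℝ) ≤ 2^m := one_le_pow₀ (by norm_num)
      linarith
    · have hk1 : (1:ℝ) ≤ (k:ℝ) := by exact_mod_cast hk
      have h5 : (0:ℝ) ≤ (2:ℝ)^m := by positivity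
      calc ((k:ℝ)+1) ^ m ≤ (2 * (k:ℝ)) ^ m := by
            apply pow_le_pow_left₀ (by positivity)
            linarith
        _ = (2:ℝ)^m * (k:ℝ)^m := mul_pow 2 _ m
        _ ≤ (2:ℝ)^m * (k:ℝ)^m + (2:ℝ)^m := by linarith
  calc ((k:ℝ)+1) ^ m * w ^ k ≤ ((2:ℝ)^m * (k:ℝ)^m + (2:ℝ)^m) * w ^ k := by
        apply mul_le_mul_of_nonneg_right hb (by positivity)
    _ = (2:ℝ)^m * ((k:ℝ) ^ m * w ^ k) + (2:ℝ)^m * w ^ k := by ring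

lemma summable_of_le_poly_geom {x : ℝ} (hx : 0 ≤ x) {u : ℕ → ℝ} (m : ℕ) (C : ℝ)
    (hu0 : ∀ k, 0 ≤ u k) (hu : ∀ k, u k ≤ C * ((k:ℝ)+1) ^ m * (x / (1+x)) ^ k) :
    Summable u := by
  have h2 : (0:ℝ) < 1 + x := by linarith
  have hw0 : 0 ≤ x / (1+x) := by positivity
  have hw1 : x / (1+x) < 1 := by rw [div_lt_one h2]; linarith
  refine Summable.of_nonneg_of_le (f := fun k : ℕ => C * (((k:ℝ)+1) ^ m * (x / (1+x)) ^ k)) hu0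
    (fun k => by simpa [mul_assoc] using hu k)
    ((summable_poly_geom hw0 hw1 m).mul_left C)


-- negative binomial series
lemma hasSum_risingFac {w : ℝ} (hw0 : 0 ≤ w) (hw1 : w < 1) (n : ℕ) :
    HasSum (fun i : ℕ => risingFac n i * w ^ i / (i.factorial : ℝ)) (1 / (1 - w) ^ n) := by
  have hnorm : ‖w‖ < 1 := by rw [Real.norm_eq_abs, abs_of_nonneg hw0]; exact hw1
  cases n with
  | zero =>
      have h0 : (fun i : ℕ => risingFac 0 i * w ^ i / (i.factorial : ℝ)) 0 = 1 := by
        simp [risingFac]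
      rw [show (1 : ℝ) / (1 - w) ^ 0 = 1 by norm_num]
      rw [show (1:ℝ) = (fun i : ℕ => risingFac 0 i * w ^ i / (i.factorial : ℝ)) 0 from h0.symm]
      apply hasSum_single
      intro i hi
      obtain ⟨j, rfl⟩ := Nat.exists_eq_succ_of_ne_zero hi
      simp [risingFac_zero']
  | succ m =>
      have key := hasSum_choose_mul_geometric_of_norm_lt_one m hnorm
      have heq : ∀ i : ℕ, risingFac (m+1) i * w ^ i / (i.factorial : ℝ)
          = ((i + m).choose m : ℝ) * w ^ i := by
        intro i
        rw [risingFac_eq, Nat.ascFactorial_eq_factorial_mul_choose]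
        rw [← Nat.choose_symm_add]
        push_cast
        field_simp
        ring
      rw [funext heq]
      exact key

lemma hasSum_exp_series (y : ℝ) :
    HasSum (fun j : ℕ => y ^ j / (j.factorial : ℝ)) (Real.exp y) := by
  rw [Real.exp_eq_exp_ℝ]
  exact NormedSpace.expSeries_div_hasSum_exp y

lemma hasSum_Wgb {a x : ℝ} (ha : 0 ≤ a) (hx : 0 ≤ x) (n : ℕ) :
    HasSum (fun k => Wgb a n k x) 1 := by
  have h2 : (0:ℝ) < 1 + x := by linarith
  set w := x / (1+x) with hw
  have hw0 : 0 ≤ w := by positivity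
  have hw1 : w < 1 := by rw [hw, div_lt_one h2]; linarith
  have h1w : 1 - w = 1 / (1+x) := by rw [hw]; field_simp; ring
  -- the two series
  set F : ℕ → ℝ := fun i => risingFac n i * w ^ i / (i.factorial : ℝ) with hF
  set G : ℕ → ℝ := fun j => (a*w) ^ j / (j.factorial : ℝ) with hG
  have hFsum : HasSum F ((1+x) ^ n) := by
    have h3 : (1:ℝ) / (1/(1+x))^n = (1+x)^n := by
      rw [div_pow, one_pow]
      field_simp
    have h4 := hasSum_risingFac hw0 hw1 n
    rw [h1w] at h4
    rwa [h3] at h4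
  have hGsum : HasSum G (Real.exp (a*w)) := hasSum_exp_series (a*w)
  have hFnorm : Summable (fun i => ‖F i‖) := by
    apply hFsum.summable.congr
    intro i
    rw [Real.norm_eq_abs, abs_of_nonneg]
    have := risingFac_nonneg n i
    positivity
  have hGnorm : Summable (fun j => ‖G j‖) := by
    apply hGsum.summable.congr
    intro j
    rw [Real.norm_eq_abs, abs_of_nonneg]
    positivity
  -- Cauchy product
  have hprod : ((∑' i, F i) * ∑' j, G j) = ∑' k, ∑ i ∈ Finset.range (k+1), F i * G (k - i) :=
    tsum_mul_tsum_eq_tsum_sum_range_of_summable_norm hFnorm hGnorm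
  have hprodsum : Summable (fun k => ∑ i ∈ Finset.range (k+1), F i * G (k - i)) :=
    summable_sum_mul_range_of_summable_norm' hFnorm hFsum.summable hGnorm hGsum.summable
  -- identify the Cauchy product terms with Pba
  have hterm : ∀ k : ℕ, ∑ i ∈ Finset.range (k+1), F i * G (k - i)
      = Pba k n a / (k.factorial : ℝ) * w ^ k := by
    intro k
    rw [Pba, Finset.sum_div, Finset.sum_mul]
    apply Finset.sum_congr rfl
    intro i hi
    rw [Finset.mem_range, Nat.lt_succ_iff] at hi
    have hch : (k.choose i : ℝ) * (i.factorial : ℝ) * ((k-i).factorial : ℝ) = (k.factorial : ℝ) := by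
      norm_cast
      exact Nat.choose_mul_factorial_mul_factorial hi
    have hpow : w ^ i * w ^ (k - i) = w ^ k := by
      rw [← pow_add]
      congr 1
      omega
    have hfi : ((i.factorial : ℝ)) ≠ 0 := by positivity
    have hfki : (((k-i).factorial : ℝ)) ≠ 0 := by positivity
    have hfk : ((k.factorial : ℝ)) ≠ 0 := by positivity
    rw [hF, hG]
    simp only []
    rw [mul_pow, ← hpow]
    field_simp
    rw [← hch]
    ring
  -- sum of the Pba series
  have hPsum : HasSum (fun k => Pba k n a / (k.factorial : ℝ) * w ^ k)
      ((1+x) ^ n * Real.exp (a*w)) := by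
    have hsummable : Summable (fun k => Pba k n a / (k.factorial : ℝ) * w ^ k) := by
      apply hprodsum.congr
      intro k
      exact hterm k
    refine (Summable.hasSum_iff hsummable).2 ?_
    rw [← hFsum.tsum_eq, ← hGsum.tsum_eq, hprod]
    exact (tsum_congr hterm).symm
  -- rewrite Wgb in terms of the Pba series
  have hWeq : ∀ k, Wgb a n k x
      = (Real.exp (-(a*w)) / (1+x)^n) * (Pba k n a / (k.factorial : ℝ) * w ^ k) := by
    intro k
    have hxw : x ^ k = w ^ k * (1+x)^k := by
      rw [hw, div_pow]
      field_simp
    have haw : -(a * x) / (1 + x) = -(a * w) := by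
      rw [hw]
      field_simp
    unfold Wgb
    rw [haw, hxw, pow_add]
    field_simp
  rw [funext hWeq]
  have := hPsum.mul_left (Real.exp (-(a*w)) / (1+x)^n)
  convert this using 1
  · rfl
  rw [div_mul_eq_mul_div]
  have hne : ((1+x):ℝ)^n ≠ 0 := by positivity
  field_simp
  rw [← Real.exp_add, neg_add_cancel, Real.exp_zero]


/-- estimate via the Lipschitz-type maximal function. -/
theorem statement2 (a τ x : ℝ) (ha : 0 ≤ a) (f : ℝ → ℝ)
    (hbdd : ∃ B : ℝ, ∀ y : ℝ, 0 ≤ y → |f y| ≤ B)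
    (hcont : ContinuousOn f (Set.Ici 0))
    (hτ : 0 < τ) (hτ1 : τ ≤ 1) (hx : 0 ≤ x)
    (hfin : BddAbove {y | ∃ t : ℝ, 0 ≤ t ∧ t ≠ x ∧ y = |f t - f x| / |t - x| ^ τ}) :
    ∀ n : ℕ,
      |Kgb a n f x - f x| ≤
        lipMaximal f τ x * (Kgb a n (fun t => (t - x) ^ 2) x) ^ (τ / 2) := by
  obtain ⟨B, hB⟩ := hbdd
  have hB0 : 0 ≤ B := le_trans (abs_nonneg _) (hB 0 le_rfl)
  intro n
  have hx1 : (0:ℝ) < 1 + x := by linarith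
  set N : ℝ := (n:ℝ) + 1 with hNdef
  have hN0 : (0:ℝ) < N := by positivity
  have hN1 : (1:ℝ) ≤ N := by simp [hNdef]
  set M : ℝ := lipMaximal f τ x with hMdef
  have hMmem : ∀ t : ℝ, 0 ≤ t → t ≠ x → |f t - f x| / |t - x| ^ τ ≤ M := fun t ht htx =>
    le_csSup hfin ⟨t, ht, htx, rfl⟩
  have hM0 : 0 ≤ M := by
    refine le_trans ?_ (hMmem (x+1) (by linarith) (by intro h; linarith [congrArg id h]))
    positivity
  have hMle : ∀ t : ℝ, 0 ≤ t → |f t - f x| ≤ M * |t - x| ^ τ := by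
    intro t ht
    by_cases htx : t = x
    · subst htx
      simp only [sub_self, abs_zero]
      rw [Real.zero_rpow hτ.ne', mul_zero]
    · have hpos : 0 < |t - x| ^ τ := Real.rpow_pos_of_pos (abs_pos.2 (sub_ne_zero.2 htx)) τ
      exact (div_le_iff₀ hpos).1 (hMmem t ht htx)
  -- intervals
  set c : ℕ → ℝ := fun k => (k:ℝ) / N with hcdef
  set d : ℕ → ℝ := fun k => ((k:ℝ)+1) / N with hddef
  have hcd : ∀ k, c k < d k := by
    intro k
    apply div_lt_div_of_pos_right (by linarith) hN0
  have hc0 : ∀ k, 0 ≤ c k := fun k => by positivity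
  have hdc : ∀ k, d k - c k = 1/N := by
    intro k
    rw [hddef, hcdef]
    rw [div_sub_div_same]
    norm_num
  have hsub : ∀ k, Set.uIcc (c k) (d k) ⊆ Set.Ici 0 := by
    intro k t ht
    rw [Set.uIcc_of_le (hcd k).le] at ht
    exact le_trans (hc0 k) ht.1
  have hint_f : ∀ k, IntervalIntegrable f volume (c k) (d k) := fun k =>
    (hcont.mono (hsub k)).intervalIntegrable
  have hi2 : ∀ k, IntervalIntegrable (fun t => (t-x)^2) volume (c k) (d k) := fun k =>
    (Continuous.intervalIntegrable (by continuity) _ _)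
  have hW : ∀ k, 0 ≤ Wgb a n k x := Wgb_nonneg ha hx n
  have hSW : HasSum (fun k => Wgb a n k x) 1 := hasSum_Wgb ha hx n
  -- second moment series
  set g2 : ℕ → ℝ := fun k => Wgb a n k x * ∫ t in c k..d k, (t - x)^2 with hg2def
  have hInt2nonneg : ∀ k, 0 ≤ ∫ t in c k..d k, (t-x)^2 := fun k =>
    intervalIntegral.integral_nonneg (hcd k).le (fun u _ => sq_nonneg _)
  have hg2nonneg : ∀ k, 0 ≤ g2 k := fun k => mul_nonneg (hW k) (hInt2nonneg k)
  have hdk_le : ∀ k, d k ≤ (k:ℝ)+1 := by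
    intro k
    rw [hddef]
    rw [div_le_iff₀ hN0]
    nlinarith [Nat.cast_nonneg (α := ℝ) k]
  have hInt2le : ∀ k, ∫ t in c k..d k, (t-x)^2 ≤ (((k:ℝ)+1)*(1+x))^2 / N := by
    intro k
    have hb : ∀ t ∈ Set.uIoc (c k) (d k), ‖(t-x)^2‖ ≤ (((k:ℝ)+1)*(1+x))^2 := by
      intro t ht
      rw [Set.uIoc_of_le (hcd k).le] at ht
      have ht0 : 0 ≤ t := le_trans (hc0 k) ht.1.le
      have ht1 : t ≤ ((k:ℝ)+1) := le_trans ht.2 (hdk_le k)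
      rw [Real.norm_eq_abs, abs_of_nonneg (sq_nonneg _)]
      apply sq_le_sq'
      · nlinarith
      · nlinarith
    have h1 := intervalIntegral.norm_integral_le_of_norm_le_const hb
    rw [Real.norm_eq_abs] at h1
    have h2 : |d k - c k| = 1/N := by rw [hdc k]; rw [abs_of_pos (by positivity)]
    rw [h2] at h1
    calc ∫ t in c k..d k, (t-x)^2 ≤ |∫ t in c k..d k, (t-x)^2| := le_abs_self _
      _ ≤ (((k:ℝ)+1)*(1+x))^2 * (1/N) := h1
      _ = (((k:ℝ)+1)*(1+x))^2 / N := by ring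
  have hg2le : ∀ k, g2 k ≤ (Real.exp a * (1+x)^2 / N) * ((k:ℝ)+1)^(n+2) * (x/(1+x))^k := by
    intro k
    calc g2 k ≤ (Real.exp a * (((k:ℝ)+1)^n * (x/(1+x))^k)) * ((((k:ℝ)+1)*(1+x))^2/N) := by
          apply mul_le_mul (Wgb_le ha hx n k) (hInt2le k) (hInt2nonneg k) (by positivity)
      _ = (Real.exp a * (1+x)^2 / N) * ((k:ℝ)+1)^(n+2) * (x/(1+x))^k := by
          rw [pow_add]; ring
  have hS2 : Summable g2 :=
    summable_of_le_poly_geom hx (n+2) (Real.exp a * (1+x)^2 / N) hg2nonneg hg2le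
  -- V
  set V : ℝ := Kgb a n (fun t => (t - x)^2) x with hVdef
  have hVeq : V = N * ∑' k, g2 k := by
    rw [hVdef, Kgb]
  have hI0pos : 0 < ∫ t in (c 0)..(d 0), (t - x)^2 := by
    have h1 : (∫ t in (c 0)..(d 0), (t - x)^2) = ∫ u in (c 0 - x)..(d 0 - x), u^2 := by
      rw [← intervalIntegral.integral_comp_sub_right (fun u => u^2) x]
    rw [h1, integral_pow]
    have hlt : c 0 - x < d 0 - x := by linarith [hcd 0]
    have h3 : (c 0 - x)^(2+1) < (d 0 - x)^(2+1) := by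
      have hodd : Odd (2+1) := ⟨1, by norm_num⟩
      exact hodd.strictMono_pow (R := ℝ) hlt
    have h4 : (0:ℝ) < (d 0 - x)^(2+1) - (c 0 - x)^(2+1) := by linarith
    apply div_pos h4 (by norm_num)
  have hV0 : 0 < V := by
    rw [hVeq]
    apply mul_pos hN0
    have hle : g2 0 ≤ ∑' k, g2 k := Summable.le_tsum hS2 0 (fun j _ => hg2nonneg j)
    have h0 : 0 < g2 0 := mul_pos (Wgb_zero_pos hx n) hI0pos
    linarith
  -- f-series
  set gf : ℕ → ℝ := fun k => Wgb a n k x * ∫ t in c k..d k, f t with hgfdef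
  have hgf_bound : ∀ k, ‖gf k‖ ≤ (Real.exp a * B / N) * ((k:ℝ)+1)^n * (x/(1+x))^k := by
    intro k
    have hb : ∀ t ∈ Set.uIoc (c k) (d k), ‖f t‖ ≤ B := by
      intro t ht
      rw [Set.uIoc_of_le (hcd k).le] at ht
      exact hB t (le_trans (hc0 k) ht.1.le)
    have h1 := intervalIntegral.norm_integral_le_of_norm_le_const hb
    rw [Real.norm_eq_abs, hdc k, abs_of_pos (by positivity : (0:ℝ) < 1/N)] at h1
    rw [hgfdef]
    simp only [Real.norm_eq_abs]
    rw [abs_mul, abs_of_nonneg (hW k)]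
    calc Wgb a n k x * |∫ t in c k..d k, f t| ≤ Wgb a n k x * (B * (1/N)) := by
          apply mul_le_mul_of_nonneg_left _ (hW k)
          exact h1
      _ ≤ (Real.exp a * (((k:ℝ)+1)^n * (x/(1+x))^k)) * (B * (1/N)) := by
          apply mul_le_mul_of_nonneg_right (Wgb_le ha hx n k) (by positivity)
      _ = (Real.exp a * B / N) * ((k:ℝ)+1)^n * (x/(1+x))^k := by ring
  have hSfnorm : Summable (fun k => ‖gf k‖) :=
    summable_of_le_poly_geom hx n (Real.exp a * B / N) (fun k => norm_nonneg _) hgf_bound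
  have hSf : Summable gf := hSfnorm.of_norm
  -- constants
  set A : ℝ := M * (τ/2) * V^(τ/2) / V with hAdef
  set Bc : ℝ := M * (1-τ/2) * V^(τ/2) with hBcdef
  have hVp : (0:ℝ) ≤ V ^ (τ/2) := (Real.rpow_pos_of_pos hV0 _).le
  have hA0 : 0 ≤ A := by
    rw [hAdef]
    have : 0 ≤ M * (τ/2) * V^(τ/2) := by positivity
    positivity
  have hBc0 : 0 ≤ Bc := by
    rw [hBcdef]
    have h12 : 0 ≤ 1 - τ/2 := by linarith
    positivity
  -- key pointwise inequality
  have hkey : ∀ t : ℝ, 0 ≤ t → |f t - f x| ≤ A * (t-x)^2 + Bc := by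
    intro t ht
    set z : ℝ := (t-x)^2 / V with hzdef
    have hz0 : 0 ≤ z := by positivity
    have hgm : z^(τ/2) * (1:ℝ)^(1-τ/2) ≤ (τ/2)*z + (1-τ/2)*1 :=
      Real.geom_mean_le_arith_mean2_weighted (by linarith) (by linarith) hz0 zero_le_one
        (by ring)
    rw [Real.one_rpow, mul_one, mul_one] at hgm
    have habs : |t-x|^τ = z^(τ/2) * V^(τ/2) := by
      rw [← Real.mul_rpow hz0 hV0.le, hzdef, div_mul_cancel₀ _ hV0.ne']
      rw [← sq_abs, ← Real.rpow_natCast |t-x| 2, ← Real.rpow_mul (abs_nonneg _)]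
      norm_num
      congr 1
      ring
    have h2 : |t-x|^τ ≤ ((τ/2)*z + (1-τ/2)) * V^(τ/2) := by
      rw [habs]
      exact mul_le_mul_of_nonneg_right hgm hVp
    calc |f t - f x| ≤ M * |t - x| ^ τ := hMle t ht
      _ ≤ M * (((τ/2)*z + (1-τ/2)) * V^(τ/2)) := mul_le_mul_of_nonneg_left h2 hM0
      _ = A * (t-x)^2 + Bc := by
          rw [hAdef, hBcdef, hzdef]
          field_simp
  -- termwise estimate
  set h : ℕ → ℝ := fun k => gf k - Wgb a n k x * (f x / N) with hhdef
  have hterm : ∀ k, ‖h k‖ ≤ A * g2 k + (Bc/N) * Wgb a n k x := by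
    intro k
    have e1 : (∫ _t in c k..d k, f x) = f x / N := by
      rw [intervalIntegral.integral_const, hdc k, smul_eq_mul]
      ring
    have e2 : h k = Wgb a n k x * ∫ t in c k..d k, (f t - f x) := by
      rw [hhdef]
      simp only []
      rw [intervalIntegral.integral_sub (hint_f k) (intervalIntegrable_const), e1, mul_sub]
    have e3 : |∫ t in c k..d k, (f t - f x)| ≤ ∫ t in c k..d k, |f t - f x| :=
      intervalIntegral.abs_integral_le_integral_abs (hcd k).le
    have e4 : (∫ t in c k..d k, |f t - f x|) ≤ ∫ t in c k..d k, (A * (t-x)^2 + Bc) := by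
      apply intervalIntegral.integral_mono_on (hcd k).le
      · exact ((hint_f k).sub (intervalIntegrable_const)).abs
      · exact ((hi2 k).const_mul A).add (intervalIntegrable_const)
      · intro t ht
        have ht0 : 0 ≤ t := le_trans (hc0 k) ht.1
        exact hkey t ht0
    have e5 : (∫ t in c k..d k, (A * (t-x)^2 + Bc)) = A * (∫ t in c k..d k, (t-x)^2) + Bc/N := by
      rw [intervalIntegral.integral_add ((hi2 k).const_mul A) (intervalIntegrable_const),
        intervalIntegral.integral_const_mul, intervalIntegral.integral_const, hdc k, smul_eq_mul]
      ring
    rw [e2, Real.norm_eq_abs, abs_mul, abs_of_nonneg (hW k)]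
    calc Wgb a n k x * |∫ t in c k..d k, (f t - f x)|
        ≤ Wgb a n k x * (A * (∫ t in c k..d k, (t-x)^2) + Bc/N) := by
          apply mul_le_mul_of_nonneg_left _ (hW k)
          rw [← e5]
          exact le_trans e3 e4
      _ = A * g2 k + (Bc/N) * Wgb a n k x := by rw [hg2def]; ring
  -- sum up
  have hSh : Summable h := hSf.sub (hSW.summable.mul_right (f x / N))
  have hbound_summable : Summable (fun k => A * g2 k + (Bc/N) * Wgb a n k x) :=
    (hS2.mul_left A).add (hSW.summable.mul_left (Bc/N))
  have hShnorm : Summable (fun k => ‖h k‖) :=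
    Summable.of_nonneg_of_le (fun k => norm_nonneg _) hterm hbound_summable
  have htsum_h : ∑' k, h k = (∑' k, gf k) - f x / N := by
    rw [hhdef, Summable.tsum_sub hSf (hSW.summable.mul_right (f x / N)),
      (hSW.mul_right (f x / N)).tsum_eq, one_mul]
  have hnorm_le : ‖∑' k, h k‖ ≤ ∑' k, ‖h k‖ := norm_tsum_le_tsum_norm hShnorm
  have htsum_bound : ∑' k, ‖h k‖ ≤ A * (V/N) + (Bc/N) := by
    calc ∑' k, ‖h k‖ ≤ ∑' k, (A * g2 k + (Bc/N) * Wgb a n k x) :=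
          Summable.tsum_le_tsum hterm hShnorm hbound_summable
      _ = A * (∑' k, g2 k) + (Bc/N) * (∑' k, Wgb a n k x) := by
          rw [Summable.tsum_add (hS2.mul_left A) (hSW.summable.mul_left (Bc/N)), tsum_mul_left,
            tsum_mul_left]
      _ = A * (V/N) + (Bc/N) := by
          rw [hSW.tsum_eq, mul_one]
          congr 1
          congr 1
          rw [hVeq]
          field_simp
  have hKf : Kgb a n f x = N * ∑' k, gf k := by
    rw [Kgb]
  calc |Kgb a n f x - f x|
      = N * ‖∑' k, h k‖ := by
        rw [hKf, htsum_h, Real.norm_eq_abs]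
        rw [show N * (∑' k, gf k) - f x = N * ((∑' k, gf k) - f x / N) from by
          rw [mul_sub, mul_div_cancel₀ _ hN0.ne']]
        rw [abs_mul, abs_of_pos hN0]
    _ ≤ N * (A * (V/N) + (Bc/N)) := by
        apply mul_le_mul_of_nonneg_left (le_trans hnorm_le htsum_bound) hN0.le
    _ = A * V + Bc := by field_simp
    _ = M * V ^ (τ/2) := by
        rw [hAdef, hBcdef]
        rw [div_mul_cancel₀ _ hV0.ne']
        ring
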